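/- (Theorem 2, part 1, identification form.) Let (Ω, F, P) be a probability space on a standard Borel space, let X₁ and X₂ be real-valued integrable random variables, V an ℝᵈ-valued random variable, and ε₀, ε₁, ε₂ integrable real-valued random variables. Assume: ε₁ is conditionally independent of the pair (X₁, X₂) given σ(V); ε₂ is conditionally independent of the pair (X₁, V) given σ(X₂); and ε₀ is conditionally independent of X₁ given σ(V, X₂). Let Y = β₀ + β₁·X₁ + ε₀ + ε₁ + ε₂ for real constants β₀, β₁. Suppose X₁ is not almost surely equal to h(X₂, V) for any Borel-measurable function h : ℝ × ℝᵈ → ℝ. Then β₁ is identified: for any real constants β₀', β₁' and any Borel-measurable g : ℝᵈ × ℝ → ℝ such that E[Y | σ(X₁, X₂, V)] = β₀' + β₁'·X₁ + g(V, X₂) almost surely, necessarily β₁' = β₁. -/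

import Mathlib

open MeasureTheory ProbabilityTheory

section Aux

variable {Ω : Type*} {m' m₁ m₂ : MeasurableSpace Ω} {mΩ : MeasurableSpace Ω}
  [StandardBorelSpace Ω] {μ : Measure Ω} [IsProbabilityMeasure μ]

lemma aux_base (hm' : m' ≤ mΩ) (hm₂ : m₂ ≤ mΩ)
    (hmul : ∀ u t, MeasurableSet[m₁] u → MeasurableSet[m₂] t →
      (μ⟦u ∩ t | m'⟧) =ᵐ[μ] (μ⟦u | m'⟧) * (μ⟦t | m'⟧))
    {u s t : Set Ω} (hu : MeasurableSet[m₁] u) (hu' : MeasurableSet[mΩ] u)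
    (hs : MeasurableSet[m'] s) (ht : MeasurableSet[m₂] t) (c : ℝ) :
    ∫ ω in s ∩ t, (u.indicator fun _ => c) ω ∂μ
      = ∫ ω in s ∩ t, (μ[u.indicator fun _ => c | m']) ω ∂μ := by
  haveI : SigmaFinite (μ.trim hm') := inferInstance
  have hs' : MeasurableSet[mΩ] s := hm' s hs
  have ht' : MeasurableSet[mΩ] t := hm₂ t ht
  have hci : (u.indicator fun _ => c) = c • (u.indicator fun _ => (1 : ℝ)) := by
    ext ω; by_cases hω : ω ∈ u <;> simp [hω]
  have hcore : ∫ ω in s ∩ t, (u.indicator fun _ => (1:ℝ)) ω ∂μ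
      = ∫ ω in s ∩ t, (μ⟦u | m'⟧) ω ∂μ := by
    have hIt_int : Integrable (t.indicator fun _ => (1:ℝ)) μ :=
      (integrable_const (1:ℝ)).indicator ht'
    have h2 : (μ⟦u | m'⟧) * (t.indicator fun _ => (1:ℝ)) = t.indicator (μ⟦u | m'⟧) := by
      ext ω; by_cases hω : ω ∈ t <;> simp [hω]
    have hmul_int : Integrable ((μ⟦u | m'⟧) * (t.indicator fun _ => (1:ℝ))) μ := by
      rw [h2]; exact integrable_condExp.indicator ht'
    have h4 : μ[(μ⟦u | m'⟧) * (t.indicator fun _ => (1:ℝ)) | m']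
        =ᵐ[μ] (μ⟦u | m'⟧) * (μ⟦t | m'⟧) :=
      condExp_mul_of_stronglyMeasurable_left stronglyMeasurable_condExp hmul_int hIt_int
    have h5 : (μ⟦u | m'⟧) * (μ⟦t | m'⟧) =ᵐ[μ] μ⟦u ∩ t | m'⟧ := (hmul u t hu ht).symm
    calc ∫ ω in s ∩ t, (u.indicator fun _ => (1:ℝ)) ω ∂μ
        = ∫ _ω in (s ∩ t) ∩ u, (1:ℝ) ∂μ := setIntegral_indicator hu'
      _ = (μ ((s ∩ t) ∩ u)).toReal := by simp [Measure.real]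
      _ = (μ (s ∩ (u ∩ t))).toReal := by rw [Set.inter_assoc, Set.inter_comm t u]
      _ = ∫ _ω in s ∩ (u ∩ t), (1:ℝ) ∂μ := by simp [Measure.real]
      _ = ∫ ω in s, ((u ∩ t).indicator fun _ => (1:ℝ)) ω ∂μ :=
          (setIntegral_indicator (hu'.inter ht')).symm
      _ = ∫ ω in s, (μ⟦u ∩ t | m'⟧) ω ∂μ :=
          (setIntegral_condExp hm' ((integrable_const (1:ℝ)).indicator (hu'.inter ht')) hs).symm
      _ = ∫ ω in s, ((μ⟦u | m'⟧) * (μ⟦t | m'⟧)) ω ∂μ :=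
          integral_congr_ae (ae_restrict_of_ae h5.symm)
      _ = ∫ ω in s, (μ[(μ⟦u | m'⟧) * (t.indicator fun _ => (1:ℝ)) | m']) ω ∂μ :=
          integral_congr_ae (ae_restrict_of_ae h4.symm)
      _ = ∫ ω in s, ((μ⟦u | m'⟧) * (t.indicator fun _ => (1:ℝ))) ω ∂μ :=
          setIntegral_condExp hm' hmul_int hs
      _ = ∫ ω in s, (t.indicator (μ⟦u | m'⟧)) ω ∂μ := by rw [h2]
      _ = ∫ ω in s ∩ t, (μ⟦u | m'⟧) ω ∂μ := setIntegral_indicator ht'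
  rw [hci]
  calc ∫ ω in s ∩ t, (c • u.indicator fun _ => (1:ℝ)) ω ∂μ
      = c * ∫ ω in s ∩ t, (u.indicator fun _ => (1:ℝ)) ω ∂μ := by
        simp_rw [Pi.smul_apply, smul_eq_mul, integral_const_mul]
    _ = c * ∫ ω in s ∩ t, (μ⟦u | m'⟧) ω ∂μ := by rw [hcore]
    _ = ∫ ω in s ∩ t, (c • (μ⟦u | m'⟧)) ω ∂μ := by
        simp_rw [Pi.smul_apply, smul_eq_mul, integral_const_mul]
    _ = ∫ ω in s ∩ t, (μ[c • u.indicator fun _ => (1:ℝ) | m']) ω ∂μ :=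
        (integral_congr_ae (ae_restrict_of_ae (condExp_smul c _ m'))).symm

lemma aux_setIntegral (hm' : m' ≤ mΩ) (hm₁ : m₁ ≤ mΩ) (hm₂ : m₂ ≤ mΩ)
    (h : CondIndep m' m₁ m₂ hm' μ) {f : Ω → ℝ} (hfm : StronglyMeasurable[m₁] f)
    (hfint : Integrable f μ) {s t : Set Ω} (hs : MeasurableSet[m'] s)
    (ht : MeasurableSet[m₂] t) :
    ∫ ω in s ∩ t, f ω ∂μ = ∫ ω in s ∩ t, (μ[f | m']) ω ∂μ := by
  haveI : SigmaFinite (μ.trim hm') := inferInstance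
  have hmul := (condIndep_iff m' m₁ m₂ hm' hm₁ hm₂ μ).mp h
  have main : ∀ ⦃f : Ω → ℝ⦄, MemLp f 1 μ → AEStronglyMeasurable[m₁] f μ →
      ∫ ω in s ∩ t, f ω ∂μ = ∫ ω in s ∩ t, (μ[f | m']) ω ∂μ := by
    refine MemLp.induction_stronglyMeasurable hm₁ ENNReal.one_ne_top
      (fun f => ∫ ω in s ∩ t, f ω ∂μ = ∫ ω in s ∩ t, (μ[f | m']) ω ∂μ) ?_ ?_ ?_ ?_
    · intro c u hu _
      exact aux_base hm' hm₂ hmul hu (hm₁ u hu) hs ht c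
    · intro f g _ hf hg _ _ hPf hPg
      have hfi := memLp_one_iff_integrable.mp hf
      have hgi := memLp_one_iff_integrable.mp hg
      have hL : ∫ ω in s ∩ t, (f + g) ω ∂μ
          = ∫ ω in s ∩ t, f ω ∂μ + ∫ ω in s ∩ t, g ω ∂μ :=
        integral_add hfi.integrableOn hgi.integrableOn
      have hR : ∫ ω in s ∩ t, (μ[f + g | m']) ω ∂μ
          = ∫ ω in s ∩ t, (μ[f | m']) ω ∂μ + ∫ ω in s ∩ t, (μ[g | m']) ω ∂μ := by
        rw [← integral_add integrable_condExp.integrableOn integrable_condExp.integrableOn]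
        refine integral_congr_ae (ae_restrict_of_ae ?_)
        filter_upwards [condExp_add hfi hgi (m := m')] with ω hω
        simp [hω]
      rw [hL, hR, hPf, hPg]
    · -- closedness
      have key : ∀ f : lpMeas ℝ ℝ m₁ 1 μ,
          ∫ ω in s ∩ t, (μ[(f : Ω → ℝ) | m']) ω ∂μ
            = ∫ ω in s ∩ t, (condExpL1CLM ℝ hm' μ (f : Lp ℝ 1 μ)) ω ∂μ := by
        intro f
        refine integral_congr_ae (ae_restrict_of_ae ?_)
        have := condExp_ae_eq_condExpL1CLM hm' (L1.integrable_coeFn (f : Lp ℝ 1 μ))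
        rwa [Integrable.toL1_coeFn] at this
      have hset : {f : lpMeas ℝ ℝ m₁ 1 μ |
            ∫ ω in s ∩ t, (f : Ω → ℝ) ω ∂μ = ∫ ω in s ∩ t, (μ[(f : Ω → ℝ) | m']) ω ∂μ}
          = {f : lpMeas ℝ ℝ m₁ 1 μ |
            (fun f : lpMeas ℝ ℝ m₁ 1 μ => ∫ ω in s ∩ t, (f : Ω → ℝ) ω ∂μ) f
              = (fun f : lpMeas ℝ ℝ m₁ 1 μ =>
                  ∫ ω in s ∩ t, (condExpL1CLM ℝ hm' μ (f : Lp ℝ 1 μ)) ω ∂μ) f} := by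
        ext f
        simp only [Set.mem_setOf_eq, key f]
      rw [hset]
      refine isClosed_eq ?_ ?_
      · exact (continuous_setIntegral _).comp continuous_subtype_val
      · exact (continuous_setIntegral _).comp
          ((condExpL1CLM ℝ hm' μ).continuous.comp continuous_subtype_val)
    · intro f g hfg hf hPf
      have h1 : ∫ ω in s ∩ t, g ω ∂μ = ∫ ω in s ∩ t, f ω ∂μ :=
        integral_congr_ae (ae_restrict_of_ae hfg.symm)
      have h2 : ∫ ω in s ∩ t, (μ[g | m']) ω ∂μ = ∫ ω in s ∩ t, (μ[f | m']) ω ∂μ :=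
        integral_congr_ae (ae_restrict_of_ae (condExp_congr_ae hfg.symm))
      rw [h1, h2, hPf]
  exact main (memLp_one_iff_integrable.mpr hfint) hfm.aestronglyMeasurable

lemma condexp_condIndep' (hm' : m' ≤ mΩ) (hm₁ : m₁ ≤ mΩ) (hm₂ : m₂ ≤ mΩ)
    (h : CondIndep m' m₁ m₂ hm' μ) {f : Ω → ℝ} (hfm : StronglyMeasurable[m₁] f)
    (hfint : Integrable f μ) :
    μ[f | m' ⊔ m₂] =ᵐ[μ] μ[f | m'] := by
  have hle : m' ⊔ m₂ ≤ mΩ := sup_le hm' hm₂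
  haveI : SigmaFinite (μ.trim hle) := inferInstance
  haveI : SigmaFinite (μ.trim hm') := inferInstance
  set PiSys : Set (Set Ω) :=
    {A | ∃ s t, MeasurableSet[m'] s ∧ MeasurableSet[m₂] t ∧ A = s ∩ t} with hPiSys
  have hgen : m' ⊔ m₂ = MeasurableSpace.generateFrom PiSys := by
    refine le_antisymm (sup_le ?_ ?_) (MeasurableSpace.generateFrom_le ?_)
    · exact fun s hs => MeasurableSpace.measurableSet_generateFrom
        ⟨s, Set.univ, hs, MeasurableSet.univ, (Set.inter_univ s).symm⟩
    · exact fun t ht => MeasurableSpace.measurableSet_generateFrom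
        ⟨Set.univ, t, MeasurableSet.univ, ht, (Set.univ_inter t).symm⟩
    · rintro A ⟨s, t, hs, ht, rfl⟩
      exact MeasurableSet.inter ((le_sup_left : m' ≤ m' ⊔ m₂) s hs)
        ((le_sup_right : m₂ ≤ m' ⊔ m₂) t ht)
  have hpi : IsPiSystem PiSys := by
    rintro A ⟨s, t, hs, ht, rfl⟩ B ⟨s', t', hs', ht', rfl⟩ -
    exact ⟨s ∩ s', t ∩ t', hs.inter hs', ht.inter ht',
      by rw [Set.inter_inter_inter_comm]⟩
  have h_eq : ∀ A, MeasurableSet[m' ⊔ m₂] A →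
      ∫ ω in A, f ω ∂μ = ∫ ω in A, (μ[f | m']) ω ∂μ := by
    intro A hA
    refine MeasurableSpace.induction_on_inter (m := m' ⊔ m₂) (C := fun A _ =>
      ∫ ω in A, f ω ∂μ = ∫ ω in A, (μ[f | m']) ω ∂μ) hgen hpi ?_ ?_ ?_ ?_ A hA
    · simp
    · rintro B ⟨s, t, hs, ht, rfl⟩
      exact aux_setIntegral hm' hm₁ hm₂ h hfm hfint hs ht
    · intro B hB hQ
      have hB' : MeasurableSet[mΩ] B := hle B hB
      have e1 := integral_add_compl hB' hfint
      have e2 := integral_add_compl hB' (integrable_condExp (μ := μ) (m := m') (f := f))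
      have e3 : ∫ ω, (μ[f | m']) ω ∂μ = ∫ ω, f ω ∂μ := integral_condExp hm'
      linarith
    · intro g hdisj hgm hQ
      rw [integral_iUnion (fun i => hle _ (hgm i)) hdisj hfint.integrableOn,
        integral_iUnion (fun i => hle _ (hgm i)) hdisj integrable_condExp.integrableOn]
      exact tsum_congr hQ
  refine (ae_eq_condExp_of_forall_setIntegral_eq hle hfint
    (fun A hA _ => integrable_condExp.integrableOn)
    (fun A hA _ => (h_eq A hA).symm) ?_).symm
  exact ((stronglyMeasurable_condExp (m := m') (μ := μ) (f := f)).mono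
    (le_sup_left : m' ≤ m' ⊔ m₂)).aestronglyMeasurable

lemma comap_prodMk {Ω α β : Type*} [mα : MeasurableSpace α] [mβ : MeasurableSpace β]
    (f : Ω → α) (g : Ω → β) :
    MeasurableSpace.comap (fun ω => (f ω, g ω)) inferInstance
      = MeasurableSpace.comap f mα ⊔ MeasurableSpace.comap g mβ := by
  have h : (inferInstance : MeasurableSpace (α × β))
      = mα.comap Prod.fst ⊔ mβ.comap Prod.snd := rfl
  rw [h, MeasurableSpace.comap_sup, MeasurableSpace.comap_comp, MeasurableSpace.comap_comp]
  rfl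

end Aux


/-- Theorem 2 part 1 (identification form): in the complex scenario, under the conditional
independences implied by the causal diagram of Figure 4, with `Y = β₀ + β₁·X₁ + ε₀ + ε₁ + ε₂`
and `X₁` not almost surely a Borel-measurable function of `(X₂, V)`, the search ad ROAS `β₁`
is identified: any representation `E[Y | σ(X₁, X₂, V)] = β₀' + β₁'·X₁ + g(V, X₂)` a.s.
forces `β₁' = β₁`. -/
theorem stmt_11 {Ω : Type*} {mΩ : MeasurableSpace Ω} [StandardBorelSpace Ω]
    (μ : Measure Ω) [IsProbabilityMeasure μ] {d : ℕ}
    (X₁ X₂ : Ω → ℝ) (V : Ω → (Fin d → ℝ)) (ε₀ ε₁ ε₂ : Ω → ℝ)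
    (hX₁m : Measurable X₁) (hX₂m : Measurable X₂) (hVm : Measurable V)
    (hε₀m : Measurable ε₀) (hε₁m : Measurable ε₁) (hε₂m : Measurable ε₂)
    (hX₁int : Integrable X₁ μ) (hX₂int : Integrable X₂ μ)
    (hε₀int : Integrable ε₀ μ) (hε₁int : Integrable ε₁ μ) (hε₂int : Integrable ε₂ μ)
    (hCI₁ : CondIndepFun (MeasurableSpace.comap V inferInstance) hVm.comap_le
      ε₁ (fun ω => (X₁ ω, X₂ ω)) μ)
    (hCI₂ : CondIndepFun (MeasurableSpace.comap X₂ inferInstance) hX₂m.comap_le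
      ε₂ (fun ω => (X₁ ω, V ω)) μ)
    (hCI₀ : CondIndepFun
      (MeasurableSpace.comap (fun ω => (V ω, X₂ ω)) inferInstance)
      (Measurable.comap_le (hVm.prodMk hX₂m)) ε₀ X₁ μ)
    (β₀ β₁ : ℝ) (Y : Ω → ℝ) (hY : ∀ ω, Y ω = β₀ + β₁ * X₁ ω + ε₀ ω + ε₁ ω + ε₂ ω)
    (hnot : ¬ ∃ h : ℝ × (Fin d → ℝ) → ℝ, Measurable h ∧ X₁ =ᵐ[μ] fun ω => h (X₂ ω, V ω)) :
    ∀ (β₀' β₁' : ℝ) (g : (Fin d → ℝ) × ℝ → ℝ), Measurable g →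
      (μ[Y | MeasurableSpace.comap (fun ω => (X₁ ω, X₂ ω, V ω)) inferInstance] =ᵐ[μ]
        fun ω => β₀' + β₁' * X₁ ω + g (V ω, X₂ ω)) →
      β₁' = β₁ := by
  intro β₀' β₁' g hg hEq
  -- names for the comap σ-algebras (as plain terms, not local defs)
  have hsplit3 : MeasurableSpace.comap (fun ω => (X₁ ω, X₂ ω, V ω)) inferInstance
      = MeasurableSpace.comap X₁ inferInstance
        ⊔ (MeasurableSpace.comap X₂ inferInstance ⊔ MeasurableSpace.comap V inferInstance) := by
    rw [comap_prodMk X₁ (fun ω => (X₂ ω, V ω)), comap_prodMk X₂ V]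
  have hm_le : MeasurableSpace.comap (fun ω => (X₁ ω, X₂ ω, V ω)) inferInstance ≤ mΩ :=
    (hX₁m.prodMk (hX₂m.prodMk hVm)).comap_le
  -- conditional expectation of ε₁ given everything equals that given V
  have h₁ : CondIndep (MeasurableSpace.comap V inferInstance)
      (MeasurableSpace.comap ε₁ inferInstance)
      (MeasurableSpace.comap (fun ω => (X₁ ω, X₂ ω)) inferInstance) hVm.comap_le μ :=
    (condIndepFun_iff_condIndep _ hVm.comap_le ε₁ (fun ω => (X₁ ω, X₂ ω)) μ).mp hCI₁
  have h₂ : CondIndep (MeasurableSpace.comap X₂ inferInstance)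
      (MeasurableSpace.comap ε₂ inferInstance)
      (MeasurableSpace.comap (fun ω => (X₁ ω, V ω)) inferInstance) hX₂m.comap_le μ :=
    (condIndepFun_iff_condIndep _ hX₂m.comap_le ε₂ (fun ω => (X₁ ω, V ω)) μ).mp hCI₂
  have h₀ : CondIndep (MeasurableSpace.comap (fun ω => (V ω, X₂ ω)) inferInstance)
      (MeasurableSpace.comap ε₀ inferInstance)
      (MeasurableSpace.comap X₁ inferInstance) (hVm.prodMk hX₂m).comap_le μ :=
    (condIndepFun_iff_condIndep _ (hVm.prodMk hX₂m).comap_le ε₀ X₁ μ).mp hCI₀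
  have hce₁ : μ[ε₁ | MeasurableSpace.comap (fun ω => (X₁ ω, X₂ ω, V ω)) inferInstance]
      =ᵐ[μ] μ[ε₁ | MeasurableSpace.comap V inferInstance] := by
    have heq : MeasurableSpace.comap V (inferInstance : MeasurableSpace (Fin d → ℝ))
        ⊔ MeasurableSpace.comap (fun ω => (X₁ ω, X₂ ω)) inferInstance
        = MeasurableSpace.comap (fun ω => (X₁ ω, X₂ ω, V ω)) inferInstance := by
      rw [comap_prodMk X₁ X₂, hsplit3, sup_comm, sup_assoc]
    have := condexp_condIndep' hVm.comap_le hε₁m.comap_le (hX₁m.prodMk hX₂m).comap_le h₁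
      ((Measurable.of_comap_le le_rfl).stronglyMeasurable) hε₁int
    rwa [heq] at this
  have hce₂ : μ[ε₂ | MeasurableSpace.comap (fun ω => (X₁ ω, X₂ ω, V ω)) inferInstance]
      =ᵐ[μ] μ[ε₂ | MeasurableSpace.comap X₂ inferInstance] := by
    have heq : MeasurableSpace.comap X₂ (inferInstance : MeasurableSpace ℝ)
        ⊔ MeasurableSpace.comap (fun ω => (X₁ ω, V ω)) inferInstance
        = MeasurableSpace.comap (fun ω => (X₁ ω, X₂ ω, V ω)) inferInstance := by
      rw [comap_prodMk X₁ V, hsplit3, ← sup_assoc, sup_comm (MeasurableSpace.comap X₂ _)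
        (MeasurableSpace.comap X₁ _), sup_assoc]
    have := condexp_condIndep' hX₂m.comap_le hε₂m.comap_le (hX₁m.prodMk hVm).comap_le h₂
      ((Measurable.of_comap_le le_rfl).stronglyMeasurable) hε₂int
    rwa [heq] at this
  have hce₀ : μ[ε₀ | MeasurableSpace.comap (fun ω => (X₁ ω, X₂ ω, V ω)) inferInstance]
      =ᵐ[μ] μ[ε₀ | MeasurableSpace.comap (fun ω => (V ω, X₂ ω)) inferInstance] := by
    have heq : MeasurableSpace.comap (fun ω => (V ω, X₂ ω)) inferInstance
        ⊔ MeasurableSpace.comap X₁ (inferInstance : MeasurableSpace ℝ)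
        = MeasurableSpace.comap (fun ω => (X₁ ω, X₂ ω, V ω)) inferInstance := by
      rw [comap_prodMk V X₂, hsplit3, sup_comm _ (MeasurableSpace.comap X₁ _),
        sup_comm (MeasurableSpace.comap V _) (MeasurableSpace.comap X₂ _)]
    have := condexp_condIndep' (hVm.prodMk hX₂m).comap_le hε₀m.comap_le hX₁m.comap_le h₀
      ((Measurable.of_comap_le le_rfl).stronglyMeasurable) hε₀int
    rwa [heq] at this
  -- conditional expectation of Y
  have hX₁M : Measurable[MeasurableSpace.comap (fun ω => (X₁ ω, X₂ ω, V ω)) inferInstance] X₁ := by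
    refine Measurable.of_comap_le ?_
    rw [hsplit3]; exact le_sup_left
  have hW_sm : StronglyMeasurable[MeasurableSpace.comap
      (fun ω => (X₁ ω, X₂ ω, V ω)) inferInstance] (fun ω => β₀ + β₁ * X₁ ω) :=
    ((hX₁M.const_mul β₁).const_add β₀).stronglyMeasurable
  have hW_int : Integrable (fun ω => β₀ + β₁ * X₁ ω) μ := by
    have : (fun ω => β₀ + β₁ * X₁ ω) = (fun _ => β₀) + fun ω => β₁ * X₁ ω := rfl
    rw [this]; exact (integrable_const β₀).add (hX₁int.const_mul β₁)
  have hYdef : Y = (fun ω => β₀ + β₁ * X₁ ω) + ε₀ + ε₁ + ε₂ := by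
    funext ω; rw [hY ω]; rfl
  have hsum : μ[Y | MeasurableSpace.comap (fun ω => (X₁ ω, X₂ ω, V ω)) inferInstance]
      =ᵐ[μ] (fun ω => β₀ + β₁ * X₁ ω)
        + μ[ε₀ | MeasurableSpace.comap (fun ω => (X₁ ω, X₂ ω, V ω)) inferInstance]
        + μ[ε₁ | MeasurableSpace.comap (fun ω => (X₁ ω, X₂ ω, V ω)) inferInstance]
        + μ[ε₂ | MeasurableSpace.comap (fun ω => (X₁ ω, X₂ ω, V ω)) inferInstance] := by
    haveI : SigmaFinite (μ.trim hm_le) := inferInstance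
    rw [hYdef]
    have h1 := condExp_add (m := MeasurableSpace.comap (fun ω => (X₁ ω, X₂ ω, V ω)) inferInstance)
      (((hW_int.add hε₀int).add hε₁int)) hε₂int (μ := μ)
    have h2 := condExp_add (m := MeasurableSpace.comap (fun ω => (X₁ ω, X₂ ω, V ω)) inferInstance)
      ((hW_int.add hε₀int)) hε₁int (μ := μ)
    have h3 := condExp_add (m := MeasurableSpace.comap (fun ω => (X₁ ω, X₂ ω, V ω)) inferInstance)
      hW_int hε₀int (μ := μ)
    have hW : μ[(fun ω => β₀ + β₁ * X₁ ω) |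
        MeasurableSpace.comap (fun ω => (X₁ ω, X₂ ω, V ω)) inferInstance]
        = fun ω => β₀ + β₁ * X₁ ω :=
      condExp_of_stronglyMeasurable hm_le hW_sm hW_int
    filter_upwards [h1, h2, h3] with ω e1 e2 e3
    simp only [Pi.add_apply] at e1 e2 e3 ⊢
    rw [e1, e2, e3, hW]
  -- factorization via condDistrib
  have hφ₁ : μ[ε₁ | MeasurableSpace.comap V inferInstance]
      =ᵐ[μ] fun ω => (fun x => ∫ y, y ∂condDistrib ε₁ V μ x) (V ω) :=
    condExp_ae_eq_integral_condDistrib' hVm hε₁int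
  have hφ₂ : μ[ε₂ | MeasurableSpace.comap X₂ inferInstance]
      =ᵐ[μ] fun ω => (fun x => ∫ y, y ∂condDistrib ε₂ X₂ μ x) (X₂ ω) :=
    condExp_ae_eq_integral_condDistrib' hX₂m hε₂int
  have hφ₀ : μ[ε₀ | MeasurableSpace.comap (fun ω => (V ω, X₂ ω)) inferInstance]
      =ᵐ[μ] fun ω => (fun x => ∫ y, y ∂condDistrib ε₀ (fun ω => (V ω, X₂ ω)) μ x)
        (V ω, X₂ ω) :=
    condExp_ae_eq_integral_condDistrib' (hVm.prodMk hX₂m) hε₀int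
  have hφ₁m : Measurable fun x => ∫ y, y ∂condDistrib ε₁ V μ x :=
    (StronglyMeasurable.integral_kernel_prod_right'
      (κ := condDistrib ε₁ V μ) measurable_snd.stronglyMeasurable).measurable
  have hφ₂m : Measurable fun x => ∫ y, y ∂condDistrib ε₂ X₂ μ x :=
    (StronglyMeasurable.integral_kernel_prod_right'
      (κ := condDistrib ε₂ X₂ μ) measurable_snd.stronglyMeasurable).measurable
  have hφ₀m : Measurable fun x => ∫ y, y ∂condDistrib ε₀ (fun ω => (V ω, X₂ ω)) μ x :=
    (StronglyMeasurable.integral_kernel_prod_right'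
      (κ := condDistrib ε₀ (fun ω => (V ω, X₂ ω)) μ) measurable_snd.stronglyMeasurable).measurable
  -- combine everything
  by_contra hne
  apply hnot
  refine ⟨fun p => (β₀ - β₀' + ((∫ y, y ∂condDistrib ε₀ (fun ω => (V ω, X₂ ω)) μ (p.2, p.1))
      + (∫ y, y ∂condDistrib ε₁ V μ p.2) + (∫ y, y ∂condDistrib ε₂ X₂ μ p.1))
      - g (p.2, p.1)) / (β₁' - β₁), ?_, ?_⟩
  · refine Measurable.div_const ?_ _
    refine Measurable.sub ?_ (hg.comp (measurable_snd.prodMk measurable_fst))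
    refine Measurable.add measurable_const ?_
    exact ((hφ₀m.comp (measurable_snd.prodMk measurable_fst)).add
      (hφ₁m.comp measurable_snd)).add (hφ₂m.comp measurable_fst)
  · filter_upwards [hEq.symm.trans hsum, hce₀, hce₁, hce₂, hφ₀, hφ₁, hφ₂]
      with ω e e0 e1 e2 f0 f1 f2
    simp only [Pi.add_apply] at e
    rw [e0, f0, e1, f1, e2, f2] at e
    have hden : β₁' - β₁ ≠ 0 := sub_ne_zero.mpr hne
    field_simp
    linarith
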